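/- Let N ≥ 1, let λ_1,…,λ_N be nonzero reals, c_1,…,c_N reals, and (δ^{(ℓ)})_{ℓ≥0} a real sequence. Define moments μ_i^{(s,n)} := Σ_{j=1}^N c_j λ_j^{i+s} Π_{ℓ=0}^{n−1} (λ_j + δ^{(ℓ)}) for i ∈ ℕ, s ∈ ℤ, n ∈ ℕ, Hankel determinants τ_0^{(s,n)} := 1, τ_i^{(s,n)} := det(μ_{j+k}^{(s,n)})_{j,k=0}^{i−1}, and set Q_i^{(s,n)} := τ_{i−1}^{(s,n)} τ_i^{(s+1,n)} / (τ_i^{(s,n)} τ_{i−1}^{(s+1,n)}), E_i^{(s,n)} := τ_{i+1}^{(s,n)} τ_{i−1}^{(s+1,n)} / (τ_i^{(s,n)} τ_i^{(s+1,n)}) for 1 ≤ i ≤ N−1 with E_0^{(s,n)} := 0 and E_N^{(s,n)} := 0, and Q̄_i^{(s,n)} := τ_{i−1}^{(s,n)} τ_i^{(s,n+1)} / (τ_i^{(s,n)} τ_{i−1}^{(s,n+1)}), Ē_i^{(s,n)} := τ_{i+1}^{(s,n)} τ_{i−1}^{(s,n+1)} / (τ_i^{(s,n)} τ_i^{(s,n+1)})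 for 1 ≤ i ≤ N−1 with Ē_0^{(s,n)} := 0 and Ē_N^{(s,n)} := 0. Fix s ∈ ℤ and n ∈ ℕ, and assume τ_i^{(s,n)}, τ_i^{(s−1,n)}, τ_i^{(s+1,n)}, τ_i^{(s,n+1)}, τ_i^{(s−1,n+1)} are all nonzero for i = 1,…,N. Then: Q_i^{(s−1,n+1)} + E_i^{(s−1,n+1)} = Q̄_i^{(s,n)} + Ē_i^{(s,n)} − δ^{(n)} for i = 1,…,N, and Q_{i+1}^{(s−1,n+1)} E_i^{(s−1,n+1)} = Q̄_{i+1}^{(s,n)} Ē_i^{(s,n)} for i = 1,…,N−1. -/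

import Mathlib

open Finset

/-- Moments μ_i^{(s,n)} := Σ_{j=1}^N c_j λ_j^{i+s} Π_{ℓ=0}^{n−1}(λ_j + δ^{(ℓ)}). -/
noncomputable def mom {N : ℕ} (lam c : Fin N → ℝ) (δ : ℕ → ℝ) (i : ℕ) (s : ℤ) (n : ℕ) : ℝ :=
  ∑ j : Fin N, c j * lam j ^ ((i : ℤ) + s) * ∏ l ∈ Finset.range n, (lam j + δ l)

/-- Hankel determinants τ_i^{(s,n)}. -/
noncomputable def tauH {N : ℕ} (lam c : Fin N → ℝ) (δ : ℕ → ℝ) (i : ℕ) (s : ℤ) (n : ℕ) : ℝ :=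
  Matrix.det (Matrix.of fun j k : Fin i => mom lam c δ (j.1 + k.1) s n)

/-- Q_i^{(s,n)}. -/
noncomputable def Qsn {N : ℕ} (lam c : Fin N → ℝ) (δ : ℕ → ℝ) (i : ℕ) (s : ℤ) (n : ℕ) : ℝ :=
  tauH lam c δ (i - 1) s n * tauH lam c δ i (s + 1) n /
    (tauH lam c δ i s n * tauH lam c δ (i - 1) (s + 1) n)

/-- E_i^{(s,n)}, with the conventions E_0^{(s,n)} = 0 and E_N^{(s,n)} = 0. -/
noncomputable def Esn {N : ℕ} (lam c : Fin N → ℝ) (δ : ℕ → ℝ) (i : ℕ) (s : ℤ) (n : ℕ) : ℝ :=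
  if i = 0 ∨ i = N then 0 else
    tauH lam c δ (i + 1) s n * tauH lam c δ (i - 1) (s + 1) n /
      (tauH lam c δ i s n * tauH lam c δ i (s + 1) n)

/-- Q̄_i^{(s,n)}. -/
noncomputable def Qbsn {N : ℕ} (lam c : Fin N → ℝ) (δ : ℕ → ℝ) (i : ℕ) (s : ℤ) (n : ℕ) : ℝ :=
  tauH lam c δ (i - 1) s n * tauH lam c δ i s (n + 1) /
    (tauH lam c δ i s n * tauH lam c δ (i - 1) s (n + 1))

/-- Ē_i^{(s,n)}, with the conventions Ē_0^{(s,n)} = 0 and Ē_N^{(s,n)} = 0. -/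
noncomputable def Ebsn {N : ℕ} (lam c : Fin N → ℝ) (δ : ℕ → ℝ) (i : ℕ) (s : ℤ) (n : ℕ) : ℝ :=
  if i = 0 ∨ i = N then 0 else
    tauH lam c δ (i + 1) s n * tauH lam c δ (i - 1) s (n + 1) /
      (tauH lam c δ i s n * tauH lam c δ i s (n + 1))

/-! ### Auxiliary determinant lemmas -/

namespace Stmt8Aux
open Matrix

section DetLemmas
set_option linter.unusedSectionVars false
variable {R : Type*} [CommRing R] {n : Type*} [DecidableEq n] [Fintype n]

lemma myUpdateRow_comm (M : Matrix n n R) {i j : n} (hij : i ≠ j) (u v : n → R) :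
    (M.updateRow i u).updateRow j v = (M.updateRow j v).updateRow i u := by
  ext a b
  rcases eq_or_ne a i with rfl | hai
  · rw [updateRow_ne hij, updateRow_self, updateRow_self]
  · rcases eq_or_ne a j with rfl | haj
    · rw [updateRow_self, updateRow_ne hij.symm, updateRow_self]
    · rw [updateRow_ne haj, updateRow_ne hai, updateRow_ne hai, updateRow_ne haj]

lemma det_updateRow_finset_sum (M : Matrix n n R) (j : n) {ι : Type*} (s : Finset ι)
    (f : ι → n → R) :
    (M.updateRow j (∑ k ∈ s, f k)).det = ∑ k ∈ s, (M.updateRow j (f k)).det := by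
  classical
  induction s using Finset.induction with
  | empty =>
      have h0 : (0 : n → R) = (0 : R) • (0 : n → R) := by rw [zero_smul]
      rw [Finset.sum_empty, h0, det_updateRow_smul, zero_mul, Finset.sum_empty]
  | insert _ _ hmem ih =>
      rw [Finset.sum_insert hmem, det_updateRow_add, ih, Finset.sum_insert hmem]

lemma one_row_eq_single (a : n) : (1 : Matrix n n R) a = Pi.single a 1 := by
  funext b
  rw [Matrix.one_apply, Pi.single_apply]
  simp [eq_comm]

lemma det_one_two_singles (i j k l : n) (hij : i ≠ j) :
    (((1 : Matrix n n R).updateRow j (Pi.single l 1)).updateRow i (Pi.single k 1)).det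
      = (if k = i ∧ l = j then 1 else 0) - (if k = j ∧ l = i then 1 else 0) := by
  by_cases h1 : k = i ∧ l = j
  · rw [show k = i from h1.1, show l = j from h1.2]
    rw [← one_row_eq_single, ← one_row_eq_single, updateRow_eq_self, updateRow_eq_self, det_one]
    simp [h1, hij]
  · by_cases h2 : k = j ∧ l = i
    · rw [show k = j from h2.1, show l = i from h2.2]
      have hmat : ((1 : Matrix n n R).updateRow j (Pi.single i 1)).updateRow i (Pi.single j 1)
          = (1 : Matrix n n R).submatrix (Equiv.swap i j) id := by
        ext a b
        rcases eq_or_ne a i with rfl | hai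
        · rw [updateRow_self]
          simp [Matrix.one_apply, Equiv.swap_apply_left, Pi.single_apply, eq_comm]
        · rcases eq_or_ne a j with rfl | haj
          · rw [updateRow_ne hij.symm, updateRow_self]
            simp [Matrix.one_apply, Equiv.swap_apply_right, Pi.single_apply, eq_comm]
          · rw [updateRow_ne hai, updateRow_ne haj]
            simp [Matrix.one_apply, Equiv.swap_apply_of_ne_of_ne hai haj]
      rw [hmat, det_permute, det_one, Equiv.Perm.sign_swap hij]
      have : ¬(j = i ∧ i = j) := fun h => hij h.2
      simp [this, hij]
    · have hz : (((1 : Matrix n n R).updateRow j (Pi.single l 1)).updateRow i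
          (Pi.single k 1)).det = 0 := by
        set M := ((1 : Matrix n n R).updateRow j (Pi.single l 1)).updateRow i (Pi.single k 1)
          with hM
        have hMi : M i = Pi.single k 1 := updateRow_self
        have hMj : M j = Pi.single l 1 := by
          rw [hM, updateRow_ne hij.symm, updateRow_self]
        have hMother : ∀ a, a ≠ i → a ≠ j → M a = Pi.single a 1 := by
          intro a hai haj
          rw [hM, updateRow_ne hai, updateRow_ne haj, one_row_eq_single]
        by_cases hkl : k = l
        · exact det_zero_of_row_eq hij (by rw [hMi, hMj, hkl])
        · by_cases hli : l = i
          · by_cases hki : k = i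
            · exact det_zero_of_row_eq hij (by rw [hMi, hMj, hki, hli])
            · exact det_zero_of_row_eq (show i ≠ k from Ne.symm hki)
                (by rw [hMi, hMother k hki (fun h => h2 ⟨h, hli⟩)])
          · by_cases hlj : l = j
            · by_cases hkj : k = j
              · exact det_zero_of_row_eq hij (by rw [hMi, hMj, hkj, hlj])
              · exact det_zero_of_row_eq (show i ≠ k from fun h => h1 ⟨h.symm, hlj⟩)
                  (by rw [hMi, hMother k (fun h => h1 ⟨h, hlj⟩) hkj])
            · exact det_zero_of_row_eq (show j ≠ l from Ne.symm hlj)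
                (by rw [hMj, hMother l hli hlj])
      rw [hz]
      simp [h1, h2]

lemma det_one_update_update (i j : n) (hij : i ≠ j) (u v : n → R) :
    (((1 : Matrix n n R).updateRow i u).updateRow j v).det = u i * v j - u j * v i := by
  have hv : v = ∑ l, Pi.single l (v l) := (Finset.univ_sum_single v).symm
  conv_lhs => rw [hv]
  rw [det_updateRow_finset_sum]
  have step1 : ∀ l : n, (((1 : Matrix n n R).updateRow i u).updateRow j
      (Pi.single l (v l))).det
      = v l * (u i * (if l = j then 1 else 0) - u j * (if l = i then 1 else 0)) := by
    intro l
    have hs : Pi.single l (v l) = v l • (Pi.single l 1 : n → R) := by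
      rw [← Pi.single_smul, smul_eq_mul, mul_one]
    rw [hs, det_updateRow_smul]
    congr 1
    rw [myUpdateRow_comm _ hij]
    have hu : u = ∑ k, Pi.single k (u k) := (Finset.univ_sum_single u).symm
    conv_lhs => rw [hu]
    rw [det_updateRow_finset_sum]
    have step2 : ∀ k : n, (((1 : Matrix n n R).updateRow j (Pi.single l 1)).updateRow i
        (Pi.single k (u k))).det
        = u k * ((if k = i ∧ l = j then 1 else 0) - (if k = j ∧ l = i then 1 else 0)) := by
      intro k
      have hs2 : Pi.single k (u k) = u k • (Pi.single k 1 : n → R) := by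
        rw [← Pi.single_smul, smul_eq_mul, mul_one]
      rw [hs2, det_updateRow_smul, det_one_two_singles i j k l hij]
    simp only [step2]
    simp only [mul_sub, Finset.sum_sub_distrib]
    congr 1
    · rw [Finset.sum_eq_single i]
      · by_cases hlj : l = j <;> simp [hlj, mul_comm]
      · intro k _ hk; simp [hk]
      · simp
    · rw [Finset.sum_eq_single j]
      · by_cases hli : l = i <;> simp [hli, mul_comm]
      · intro k _ hk
        have : ¬(k = j ∧ l = i) := fun h => hk h.1
        simp [this]
      · simp
  simp only [step1]
  simp only [mul_sub, Finset.sum_sub_distrib]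
  have e1 : ∑ l : n, v l * (u i * (if l = j then 1 else 0)) = u i * v j := by
    rw [Finset.sum_eq_single j]
    · rw [if_pos rfl, mul_one, mul_comm]
    · intro k _ hk; simp [hk]
    · simp
  have e2 : ∑ l : n, v l * (u j * (if l = i then 1 else 0)) = u j * v i := by
    rw [Finset.sum_eq_single i]
    · rw [if_pos rfl, mul_one, mul_comm]
    · intro k _ hk; simp [hk]
    · simp
  rw [e1, e2]

end DetLemmas

section Field
variable {F : Type*} [Field F]

lemma dj_update {m : ℕ} (A : Matrix (Fin (m + 2)) (Fin (m + 2)) F) (hA : A.det ≠ 0) :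
    A.det * ((A.updateRow 0 (Pi.single 0 1)).updateRow (Fin.last (m + 1))
        (Pi.single (Fin.last (m + 1)) 1)).det
      = (A.updateRow 0 (Pi.single 0 1)).det
          * (A.updateRow (Fin.last (m + 1)) (Pi.single (Fin.last (m + 1)) 1)).det
        - (A.updateRow (Fin.last (m + 1)) (Pi.single 0 1)).det
          * (A.updateRow 0 (Pi.single (Fin.last (m + 1)) 1)).det := by
  have h0L : (0 : Fin (m + 2)) ≠ Fin.last (m + 1) := by
    simp [Fin.ext_iff]
  set i0 : Fin (m + 2) := 0 with hi0
  set iL : Fin (m + 2) := Fin.last (m + 1) with hiL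
  set C : Matrix (Fin (m + 2)) (Fin (m + 2)) F :=
    ((1 : Matrix _ _ F).updateRow i0 (adjugate A i0)).updateRow iL (adjugate A iL) with hC
  have hCA : C * A = (A.updateRow i0 (A.det • (Pi.single i0 1 : Fin (m+2) → F))).updateRow iL
      (A.det • (Pi.single iL 1 : Fin (m+2) → F)) := by
    ext a b
    rw [Matrix.mul_apply]
    rcases eq_or_ne a iL with rfl | haL
    · have hrow : C iL = adjugate A iL := updateRow_self
      calc ∑ k, C iL k * A k b = (adjugate A * A) iL b := by
            rw [Matrix.mul_apply]; exact Finset.sum_congr rfl fun k _ => by rw [hrow]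
        _ = (A.det • (1 : Matrix _ _ F)) iL b := by rw [adjugate_mul]
        _ = _ := by
            rw [updateRow_self, Matrix.smul_apply, Pi.smul_apply, smul_eq_mul, smul_eq_mul,
              Matrix.one_apply, Pi.single_apply]
            simp [eq_comm]
    · rcases eq_or_ne a i0 with rfl | ha0
      · have hrow : C i0 = adjugate A i0 := by
          rw [hC, updateRow_ne h0L, updateRow_self]
        calc ∑ k, C i0 k * A k b = (adjugate A * A) i0 b := by
              rw [Matrix.mul_apply]; exact Finset.sum_congr rfl fun k _ => by rw [hrow]
          _ = (A.det • (1 : Matrix _ _ F)) i0 b := by rw [adjugate_mul]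
          _ = _ := by
              rw [updateRow_ne h0L, updateRow_self, Matrix.smul_apply, Pi.smul_apply,
                smul_eq_mul, smul_eq_mul, Matrix.one_apply, Pi.single_apply]
              simp [eq_comm]
      · have hrow : C a = (1 : Matrix _ _ F) a := by
          rw [hC, updateRow_ne haL, updateRow_ne ha0]
        calc ∑ k, C a k * A k b = ∑ k, (1 : Matrix (Fin (m+2)) (Fin (m+2)) F) a k * A k b :=
              Finset.sum_congr rfl fun k _ => by rw [hrow]
          _ = A a b := by
              rw [← Matrix.mul_apply, Matrix.one_mul]
          _ = _ := by rw [updateRow_ne haL, updateRow_ne ha0]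
  have hdet2 : C.det * A.det
      = A.det ^ 2 * ((A.updateRow i0 (Pi.single i0 1)).updateRow iL (Pi.single iL 1)).det := by
    rw [← det_mul, hCA, det_updateRow_smul, myUpdateRow_comm _ h0L, det_updateRow_smul,
      myUpdateRow_comm _ h0L.symm]
    ring
  have hdetC : C.det = adjugate A i0 i0 * adjugate A iL iL
      - adjugate A i0 iL * adjugate A iL i0 :=
    det_one_update_update i0 iL h0L _ _
  have key : (adjugate A i0 i0 * adjugate A iL iL - adjugate A i0 iL * adjugate A iL i0)
      = A.det * ((A.updateRow i0 (Pi.single i0 1)).updateRow iL (Pi.single iL 1)).det := by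
    have h2 := hdet2
    rw [hdetC] at h2
    apply mul_right_cancel₀ hA
    rw [h2]
    ring
  rw [adjugate_apply, adjugate_apply, adjugate_apply, adjugate_apply] at key
  rw [key]

lemma det_updateRow_single {m : ℕ} (A : Matrix (Fin (m + 1)) (Fin (m + 1)) F)
    (c r : Fin (m + 1)) :
    (A.updateRow c (Pi.single r 1)).det
      = (-1) ^ ((c : ℕ) + (r : ℕ)) * (A.submatrix c.succAbove r.succAbove).det := by
  rw [det_succ_row _ c]
  rw [Finset.sum_eq_single r]
  · rw [updateRow_self]
    have hsub : (A.updateRow c (Pi.single r 1)).submatrix c.succAbove r.succAbove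
        = A.submatrix c.succAbove r.succAbove := by
      ext x y
      rw [submatrix_apply, submatrix_apply, updateRow_ne (Fin.succAbove_ne c x)]
    rw [hsub, Pi.single_eq_same, mul_one]
  · intro k _ hk
    rw [updateRow_self, Pi.single_eq_of_ne hk, mul_zero, zero_mul]
  · simp

lemma dj_corner {m : ℕ} (A : Matrix (Fin (m + 2)) (Fin (m + 2)) F) (hA : A.det ≠ 0) :
    A.det * (A.submatrix (Fin.castSucc ∘ Fin.succ) (Fin.castSucc ∘ Fin.succ)).det
      = (A.submatrix Fin.succ Fin.succ).det * (A.submatrix Fin.castSucc Fin.castSucc).det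
        - (A.submatrix Fin.succ Fin.castSucc).det * (A.submatrix Fin.castSucc Fin.succ).det := by
  have key := dj_update A hA
  set L : Fin (m + 2) := Fin.last (m + 1) with hL
  have e00 : (A.updateRow 0 (Pi.single 0 1)).det = (A.submatrix Fin.succ Fin.succ).det := by
    rw [det_updateRow_single]
    simp [Fin.succAbove_zero]
  have eLL : (A.updateRow L (Pi.single L 1)).det
      = (A.submatrix Fin.castSucc Fin.castSucc).det := by
    rw [det_updateRow_single]
    rw [Fin.succAbove_last]
    have : ((L : ℕ) + (L : ℕ)) = 2 * (m + 1) := by simp [hL, Fin.val_last]; ring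
    rw [this, pow_mul]
    norm_num
  have eL0 : (A.updateRow L (Pi.single 0 1)).det
      = (-1) ^ (m + 1) * (A.submatrix Fin.castSucc Fin.succ).det := by
    rw [det_updateRow_single, Fin.succAbove_last, Fin.succAbove_zero]
    norm_num [hL, Fin.val_last]
  have e0L : (A.updateRow 0 (Pi.single L 1)).det
      = (-1) ^ (m + 1) * (A.submatrix Fin.succ Fin.castSucc).det := by
    rw [det_updateRow_single, Fin.succAbove_last, Fin.succAbove_zero]
    norm_num [hL, Fin.val_last]
  have eDD : ((A.updateRow 0 (Pi.single 0 1)).updateRow L (Pi.single L 1)).det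
      = (A.submatrix (Fin.castSucc ∘ Fin.succ) (Fin.castSucc ∘ Fin.succ)).det := by
    rw [det_updateRow_single]
    rw [Fin.succAbove_last]
    have h1 : ((L : ℕ) + (L : ℕ)) = 2 * (m + 1) := by simp [hL, Fin.val_last]; ring
    rw [h1, pow_mul]
    norm_num
    have hsub : (A.updateRow 0 (Pi.single 0 1)).submatrix
        (Fin.castSucc : Fin (m+1) → Fin (m+2)) Fin.castSucc
        = (A.submatrix (Fin.castSucc : Fin (m+1) → Fin (m+2)) Fin.castSucc).updateRow 0
            (Pi.single 0 1) := by
      ext x y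
      rcases eq_or_ne x 0 with rfl | hx
      · rw [submatrix_apply]
        have hc0 : (Fin.castSucc (0 : Fin (m+1))) = (0 : Fin (m+2)) := rfl
        rw [hc0, updateRow_self, updateRow_self, Pi.single_apply, Pi.single_apply]
        simp only [Fin.castSucc_eq_zero_iff]
      · have hx' : (Fin.castSucc x) ≠ (0 : Fin (m+2)) := by
          exact Fin.castSucc_ne_zero_iff.mpr hx
        rw [submatrix_apply, updateRow_ne hx', updateRow_ne hx, submatrix_apply]
    rw [hsub, det_updateRow_single]
    have : (((0 : Fin (m+1)) : ℕ) + ((0 : Fin (m+1)) : ℕ)) = 0 := rfl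
    rw [this, pow_zero, one_mul, Fin.succAbove_zero, submatrix_submatrix]
  rw [e00, eLL, eL0, e0L, eDD] at key
  rw [key, mul_mul_mul_comm, ← pow_add]
  have h2 : ((-1 : F)) ^ (m + 1 + (m + 1)) = 1 := by
    have he : (m + 1 + (m + 1)) = 2 * (m + 1) := by ring
    rw [he, pow_mul]; norm_num
  rw [h2, one_mul, mul_comm ((A.submatrix Fin.castSucc Fin.succ).det)]

end Field

section ColOps
variable {F : Type*} [Field F]

lemma colops_D (b c : ℕ → F) (δ : F) (hbc : ∀ m, c m = b (m + 1) + δ * b m) (q : ℕ) :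
    (Matrix.of fun j k : Fin q =>
        if (k : ℕ) = 0 then b (j : ℕ) else c ((j : ℕ) + (k : ℕ) - 1)).det
      = (Matrix.of fun j k : Fin q => b ((j : ℕ) + (k : ℕ))).det := by
  rcases Nat.eq_zero_or_pos q with rfl | hq
  · rw [Matrix.det_fin_zero, Matrix.det_fin_zero]
  set M : ℕ → Matrix (Fin q) (Fin q) F := fun r =>
    Matrix.of fun j k => if (k : ℕ) ≤ r then b ((j : ℕ) + (k : ℕ)) else c ((j : ℕ) + (k : ℕ) - 1)
    with hM
  have hstep : ∀ r : ℕ, r + 1 < q → (M (r + 1)).det = (M r).det := by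
    intro r hr
    have hrq : r < q := Nat.lt_of_succ_lt hr
    have hne : (⟨r + 1, hr⟩ : Fin q) ≠ ⟨r, hrq⟩ := by
      simp [Fin.ext_iff]
    have hupd : (M (r + 1)).updateCol ⟨r + 1, hr⟩
        (fun j => M (r + 1) j ⟨r + 1, hr⟩ + δ • M (r + 1) j ⟨r, hrq⟩) = M r := by
      ext j k
      rcases eq_or_ne k (⟨r + 1, hr⟩ : Fin q) with rfl | hk
      · rw [updateCol_self]
        have h1 : M (r + 1) j ⟨r + 1, hr⟩ = b ((j : ℕ) + (r + 1)) := by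
          simp [hM]
        have h2 : M (r + 1) j ⟨r, hrq⟩ = b ((j : ℕ) + r) := by
          simp [hM]
        have h3 : M r j ⟨r + 1, hr⟩ = c ((j : ℕ) + (r + 1) - 1) := by
          simp [hM]
        rw [h1, h2, h3]
        have h4 : (j : ℕ) + (r + 1) - 1 = (j : ℕ) + r := by omega
        rw [h4, hbc ((j : ℕ) + r)]
        have h5 : (j : ℕ) + r + 1 = (j : ℕ) + (r + 1) := by omega
        rw [h5, smul_eq_mul]
      · rw [updateCol_ne hk]
        have hkv : (k : ℕ) ≠ r + 1 := fun h => hk (Fin.ext h)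
        have : ((k : ℕ) ≤ r + 1) ↔ ((k : ℕ) ≤ r) := by omega
        simp only [hM, Matrix.of_apply, this]
    rw [← hupd, det_updateCol_add_smul_self _ hne]
  have haux : ∀ t : ℕ, t < q → (M t).det = (M 0).det := by
    intro t
    induction t with
    | zero => intro _; rfl
    | succ r ih => intro h; rw [hstep r h, ih (Nat.lt_of_succ_lt h)]
  have h1 : (Matrix.of fun j k : Fin q =>
      if (k : ℕ) = 0 then b (j : ℕ) else c ((j : ℕ) + (k : ℕ) - 1)) = M 0 := by
    ext j k
    simp only [hM, Matrix.of_apply, Nat.le_zero]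
    rcases eq_or_ne ((k : ℕ)) 0 with h | h <;> simp [h]
  have h2 : M (q - 1) = (Matrix.of fun j k : Fin q => b ((j : ℕ) + (k : ℕ))) := by
    ext j k
    have : (k : ℕ) ≤ q - 1 := by omega
    simp [hM, this]
  rw [h1, ← haux (q - 1) (by omega), h2]

lemma colops_B (b c : ℕ → F) (δ : F) (hbc : ∀ m, c m = b (m + 1) + δ * b m) (p : ℕ) :
    (Matrix.of fun j k : Fin (p + 1) =>
        if (j : ℕ) = 0 then (-δ) ^ (k : ℕ) else b ((j : ℕ) - 1 + (k : ℕ))).det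
      = (Matrix.of fun j k : Fin p => c ((j : ℕ) + (k : ℕ))).det := by
  set M : ℕ → Matrix (Fin (p + 1)) (Fin (p + 1)) F := fun r =>
    Matrix.of fun j k =>
      if (k : ℕ) ≤ r then (if (j : ℕ) = 0 then (-δ) ^ (k : ℕ) else b ((j : ℕ) - 1 + (k : ℕ)))
      else (if (j : ℕ) = 0 then 0 else c ((j : ℕ) - 1 + (k : ℕ) - 1))
    with hM
  have hstep : ∀ r : ℕ, r + 1 < p + 1 → (M (r + 1)).det = (M r).det := by
    intro r hr
    have hrq : r < p + 1 := Nat.lt_of_succ_lt hr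
    have hne : (⟨r + 1, hr⟩ : Fin (p + 1)) ≠ ⟨r, hrq⟩ := by
      simp [Fin.ext_iff]
    have hupd : (M (r + 1)).updateCol ⟨r + 1, hr⟩
        (fun j => M (r + 1) j ⟨r + 1, hr⟩ + δ • M (r + 1) j ⟨r, hrq⟩) = M r := by
      ext j k
      rcases eq_or_ne k (⟨r + 1, hr⟩ : Fin (p + 1)) with rfl | hk
      · rw [updateCol_self]
        rcases eq_or_ne ((j : ℕ)) 0 with hj | hj
        · simp only [hM, Matrix.of_apply, hj, if_pos rfl]
          simp only [le_refl, if_pos, if_true]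
          have : ¬ (r + 1 ≤ r) := by omega
          simp only [this, if_false]
          rw [smul_eq_mul, if_pos (by omega : r ≤ r + 1), pow_succ]
          ring
        · simp only [hM, Matrix.of_apply, hj, if_neg hj]
          simp only [le_refl, if_pos, if_true]
          have : ¬ (r + 1 ≤ r) := by omega
          simp only [this, if_false]
          have h4 : (j : ℕ) - 1 + (r + 1) - 1 = (j : ℕ) - 1 + r := by omega
          rw [h4, hbc ((j : ℕ) - 1 + r)]
          have h5 : (j : ℕ) - 1 + r + 1 = (j : ℕ) - 1 + (r + 1) := by omega
          rw [smul_eq_mul, if_pos (by omega : r ≤ r + 1), h5]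
      · rw [updateCol_ne hk]
        have hkv : (k : ℕ) ≠ r + 1 := fun h => hk (Fin.ext h)
        have : ((k : ℕ) ≤ r + 1) ↔ ((k : ℕ) ≤ r) := by omega
        simp only [hM, Matrix.of_apply, this]
    rw [← hupd, det_updateCol_add_smul_self _ hne]
  have haux : ∀ t : ℕ, t < p + 1 → (M t).det = (M 0).det := by
    intro t
    induction t with
    | zero => intro _; rfl
    | succ r ih => intro h; rw [hstep r h, ih (Nat.lt_of_succ_lt h)]
  have h1 : (Matrix.of fun j k : Fin (p + 1) =>
      if (j : ℕ) = 0 then (-δ) ^ (k : ℕ) else b ((j : ℕ) - 1 + (k : ℕ))) = M p := by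
    ext j k
    have : (k : ℕ) ≤ p := by omega
    simp [hM, this]
  rw [h1, haux p (by omega)]
  have hrow : M 0 0 = Pi.single (0 : Fin (p + 1)) (1 : F) := by
    funext k
    simp only [hM, Matrix.of_apply, Nat.le_zero, Fin.val_zero, if_pos rfl, Pi.single_apply]
    rcases eq_or_ne ((k : ℕ)) 0 with h | h
    · have : k = 0 := Fin.ext h
      simp [h, this]
    · have : ¬ (k = 0) := fun hh => h (by rw [hh]; rfl)
      simp [h, this]
  have hupd0 : M 0 = (M 0).updateRow 0 (Pi.single 0 1) := by
    rw [← hrow, updateRow_eq_self]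
  rw [hupd0, det_updateRow_single]
  simp only [Fin.val_zero, Nat.add_zero, pow_zero, one_mul, Fin.succAbove_zero]
  have hsub : (M 0).submatrix (Fin.succ : Fin p → Fin (p+1)) Fin.succ
      = (Matrix.of fun j k : Fin p => c ((j : ℕ) + (k : ℕ))) := by
    ext j k
    rw [submatrix_apply]
    have h1 : ((Fin.succ k : Fin (p+1)) : ℕ) = (k : ℕ) + 1 := rfl
    have h2 : ((Fin.succ j : Fin (p+1)) : ℕ) = (j : ℕ) + 1 := rfl
    simp only [hM, Matrix.of_apply, h1, h2]
    rw [if_neg (by omega), if_neg (by omega)]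
    congr 1
  rw [hsub]

end ColOps

section Kseq
variable {F : Type*} [Field F]

noncomputable def Hm (u : ℕ → F) (i : ℕ) : F :=
  (Matrix.of fun j k : Fin i => u ((j : ℕ) + (k : ℕ))).det

lemma K3seq (b c : ℕ → F) (δ : F) (hbc : ∀ m, c m = b (m + 1) + δ * b m) (q : ℕ)
    (hnz : Hm b (q + 2) ≠ 0) :
    Hm b (q + 2) * Hm (fun m => c (m + 1)) q
      = Hm (fun m => c (m + 1)) (q + 1) * Hm b (q + 1)
        - Hm (fun m => b (m + 1)) (q + 1) * Hm c (q + 1) := by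
  set A : Matrix (Fin (q + 2)) (Fin (q + 2)) F :=
    Matrix.of fun j k => if (k : ℕ) = 0 then b (j : ℕ) else c ((j : ℕ) + (k : ℕ) - 1) with hA
  have hdetA : A.det = Hm b (q + 2) := colops_D b c δ hbc (q + 2)
  have e1 : A.submatrix (Fin.succ : Fin (q+1) → Fin (q+2)) Fin.succ
      = Matrix.of fun j k : Fin (q + 1) => c ((j : ℕ) + (k : ℕ) + 1) := by
    ext j k
    simp only [hA, submatrix_apply, Matrix.of_apply, Fin.val_succ]
    rw [if_neg (by omega)]
    congr 1 <;> omega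
  have e2 : A.submatrix (Fin.castSucc : Fin (q+1) → Fin (q+2)) Fin.castSucc
      = Matrix.of fun j k : Fin (q + 1) =>
          if (k : ℕ) = 0 then b (j : ℕ) else c ((j : ℕ) + (k : ℕ) - 1) := by
    ext j k
    simp only [hA, submatrix_apply, Matrix.of_apply, Fin.coe_castSucc]
  have e3 : A.submatrix (Fin.succ : Fin (q+1) → Fin (q+2)) Fin.castSucc
      = Matrix.of fun j k : Fin (q + 1) =>
          if (k : ℕ) = 0 then b ((j : ℕ) + 1) else c (((j : ℕ) + (k : ℕ) - 1) + 1) := by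
    ext j k
    simp only [hA, submatrix_apply, Matrix.of_apply, Fin.val_succ, Fin.coe_castSucc]
    rcases eq_or_ne ((k : ℕ)) 0 with h | h
    · rw [if_pos h, if_pos h]
    · rw [if_neg h, if_neg h]
      congr 1 <;> omega
  have e4 : A.submatrix (Fin.castSucc : Fin (q+1) → Fin (q+2)) Fin.succ
      = Matrix.of fun j k : Fin (q + 1) => c ((j : ℕ) + (k : ℕ)) := by
    ext j k
    simp only [hA, submatrix_apply, Matrix.of_apply, Fin.val_succ, Fin.coe_castSucc]
    rw [if_neg (by omega)]
    congr 1 <;> omega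
  have e5 : A.submatrix ((Fin.castSucc ∘ Fin.succ) : Fin q → Fin (q+2)) (Fin.castSucc ∘ Fin.succ)
      = Matrix.of fun j k : Fin q => c ((j : ℕ) + (k : ℕ) + 1) := by
    ext j k
    simp only [hA, submatrix_apply, Matrix.of_apply, Function.comp_apply, Fin.val_succ,
      Fin.coe_castSucc]
    rw [if_neg (by omega)]
    congr 1 <;> omega
  have key := dj_corner A (by rw [hdetA]; exact hnz)
  rw [e1, e2, e3, e4, e5, hdetA] at key
  rw [colops_D (fun m => b (m + 1)) (fun m => c (m + 1)) δ (fun m => hbc (m + 1)) (q + 1)] at key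
  rw [colops_D b c δ hbc (q + 1)] at key
  exact key

lemma K1seq (b c : ℕ → F) (δ : F) (hbc : ∀ m, c m = b (m + 1) + δ * b m) (p : ℕ)
    (hnz : Hm c (p + 1) ≠ 0) :
    Hm c (p + 1) * Hm (fun m => b (m + 1)) p
      = Hm (fun m => b (m + 1)) (p + 1) * Hm c p
        + δ * (Hm b (p + 1) * Hm (fun m => c (m + 1)) p) := by
  set A : Matrix (Fin (p + 2)) (Fin (p + 2)) F :=
    Matrix.of fun j k => if (j : ℕ) = 0 then (-δ) ^ (k : ℕ) else b ((j : ℕ) - 1 + (k : ℕ)) with hA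
  have hdetA : A.det = Hm c (p + 1) := colops_B b c δ hbc (p + 1)
  have e1 : A.submatrix (Fin.succ : Fin (p+1) → Fin (p+2)) Fin.succ
      = Matrix.of fun j k : Fin (p + 1) => b ((j : ℕ) + (k : ℕ) + 1) := by
    ext j k
    simp only [hA, submatrix_apply, Matrix.of_apply, Fin.val_succ]
    rw [if_neg (by omega)]
    congr 1 <;> omega
  have e2 : A.submatrix (Fin.castSucc : Fin (p+1) → Fin (p+2)) Fin.castSucc
      = Matrix.of fun j k : Fin (p + 1) =>
          if (j : ℕ) = 0 then (-δ) ^ (k : ℕ) else b ((j : ℕ) - 1 + (k : ℕ)) := by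
    ext j k
    simp only [hA, submatrix_apply, Matrix.of_apply, Fin.coe_castSucc]
  have e3 : A.submatrix (Fin.succ : Fin (p+1) → Fin (p+2)) Fin.castSucc
      = Matrix.of fun j k : Fin (p + 1) => b ((j : ℕ) + (k : ℕ)) := by
    ext j k
    simp only [hA, submatrix_apply, Matrix.of_apply, Fin.val_succ, Fin.coe_castSucc]
    rw [if_neg (by omega)]
    congr 1 <;> omega
  set B' : Matrix (Fin (p + 1)) (Fin (p + 1)) F :=
    Matrix.of fun j k => if (j : ℕ) = 0 then (-δ) ^ (k : ℕ) else b (((j : ℕ) - 1 + (k : ℕ)) + 1)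
    with hB'
  have e4 : A.submatrix (Fin.castSucc : Fin (p+1) → Fin (p+2)) Fin.succ
      = B'.updateRow 0 ((-δ) • B' 0) := by
    ext j k
    rcases eq_or_ne j (0 : Fin (p + 1)) with rfl | hj
    · rw [updateRow_self]
      simp only [hA, hB', submatrix_apply, Matrix.of_apply, Pi.smul_apply, smul_eq_mul,
        Fin.castSucc_zero, Fin.val_zero, Fin.val_succ]
      simp only [if_true]
      rw [pow_succ]
      ring
    · rw [updateRow_ne hj]
      have hjv : ((j : ℕ)) ≠ 0 := fun h => hj (Fin.ext h)
      simp only [hA, hB', submatrix_apply, Matrix.of_apply, Fin.val_succ, Fin.coe_castSucc]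
      rw [if_neg hjv, if_neg hjv]
      congr 1 <;> omega
  have e5 : A.submatrix ((Fin.castSucc ∘ Fin.succ) : Fin p → Fin (p+2)) (Fin.castSucc ∘ Fin.succ)
      = Matrix.of fun j k : Fin p => b ((j : ℕ) + (k : ℕ) + 1) := by
    ext j k
    simp only [hA, submatrix_apply, Matrix.of_apply, Function.comp_apply, Fin.val_succ,
      Fin.coe_castSucc]
    rw [if_neg (by omega)]
    congr 1 <;> omega
  have hdetB' : B'.det = Hm (fun m => c (m + 1)) p := by
    exact colops_B (fun m => b (m + 1)) (fun m => c (m + 1)) δ (fun m => hbc (m + 1)) p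
  have hdete4 : (A.submatrix (Fin.castSucc : Fin (p+1) → Fin (p+2)) Fin.succ).det
      = (-δ) * Hm (fun m => c (m + 1)) p := by
    rw [e4, det_updateRow_smul, updateRow_eq_self, hdetB']
  have key := dj_corner A (by rw [hdetA]; exact hnz)
  rw [e1, e2, e3, e5, hdetA, hdete4] at key
  rw [colops_B b c δ hbc p] at key
  have hb1 : (Matrix.of fun j k : Fin (p+1) => b ((j:ℕ) + (k:ℕ) + 1)).det
      = Hm (fun m => b (m + 1)) (p + 1) := rfl
  have hb2 : (Matrix.of fun j k : Fin p => b ((j:ℕ) + (k:ℕ) + 1)).det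
      = Hm (fun m => b (m + 1)) p := rfl
  have hc : (Matrix.of fun j k : Fin p => c ((j:ℕ) + (k:ℕ))).det = Hm c p := rfl
  have hb3 : (Matrix.of fun j k : Fin (p+1) => b ((j:ℕ) + (k:ℕ))).det = Hm b (p + 1) := rfl
  rw [hb1, hb2, hc, hb3] at key
  rw [key]
  ring

end Kseq

section Glue
variable {N : ℕ} (lam cc : Fin N → ℝ) (δ : ℕ → ℝ)

lemma mom_shift (m : ℕ) (s : ℤ) (n : ℕ) :
    mom lam cc δ (m + 1) (s - 1) n = mom lam cc δ m s n := by
  unfold mom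
  refine Finset.sum_congr rfl fun j _ => ?_
  have he : (((m + 1 : ℕ) : ℤ) + (s - 1)) = ((m : ℕ) : ℤ) + s := by push_cast; ring
  rw [he]

lemma mom_rec (hlam : ∀ j, lam j ≠ 0) (m : ℕ) (s : ℤ) (n : ℕ) :
    mom lam cc δ m (s - 1) (n + 1)
      = mom lam cc δ (m + 1) (s - 1) n + δ n * mom lam cc δ m (s - 1) n := by
  unfold mom
  rw [Finset.mul_sum, ← Finset.sum_add_distrib]
  refine Finset.sum_congr rfl fun j _ => ?_
  rw [Finset.prod_range_succ]
  have hx : lam j ^ (((m + 1 : ℕ) : ℤ) + (s - 1))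
      = lam j ^ (((m : ℕ) : ℤ) + (s - 1)) * lam j := by
    rw [← zpow_add_one₀ (hlam j)]
    congr 1
    push_cast
    ring
  rw [hx]
  ring

lemma tau_scale (hlam : ∀ j, lam j ≠ 0) (s : ℤ) (n : ℕ) :
    tauH lam cc δ N (s + 1) n = (∏ j, lam j) * tauH lam cc δ N s n := by
  set V : Matrix (Fin N) (Fin N) ℝ := Matrix.of fun j m => lam m ^ (j : ℕ) with hV
  set W : ℤ → Matrix (Fin N) (Fin N) ℝ := fun t =>
    Matrix.of fun m k => cc m * lam m ^ (((k : ℕ) : ℤ) + t) * ∏ l ∈ Finset.range n, (lam m + δ l)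
    with hW
  have hfact : ∀ t : ℤ,
      (Matrix.of fun j k : Fin N => mom lam cc δ (j.1 + k.1) t n) = V * W t := by
    intro t
    ext j k
    simp only [Matrix.of_apply, Matrix.mul_apply, hV, hW]
    unfold mom
    refine Finset.sum_congr rfl fun m _ => ?_
    have he : (((j.1 + k.1 : ℕ) : ℤ) + t) = ((j.1 : ℕ) : ℤ) + (((k.1 : ℕ) : ℤ) + t) := by
      push_cast; ring
    rw [he, zpow_add₀ (hlam m), zpow_natCast]
    ring
  have hWs : W (s + 1) = Matrix.diagonal lam * W s := by
    ext m k
    rw [Matrix.diagonal_mul]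
    simp only [hW, Matrix.of_apply]
    have he : (((k : ℕ) : ℤ) + (s + 1)) = ((((k : ℕ) : ℤ) + s) + 1) := by ring
    rw [he, zpow_add_one₀ (hlam m)]
    ring
  unfold tauH
  rw [hfact (s + 1), hfact s, Matrix.det_mul, Matrix.det_mul, hWs, Matrix.det_mul,
    Matrix.det_diagonal]
  ring

end Glue

section Alg

lemma alg1 (g0m g0m1 g0m2 g1m g1m1 f0m1 f0m2 f1m f1m1 f1m2 d : ℝ)
    (h5a : g0m1 ≠ 0) (h4a : g1m ≠ 0) (h4b : g1m1 ≠ 0) (h1a : f1m1 ≠ 0)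
    (k1a : g0m1 * f1m = f1m1 * g0m + d * (f0m1 * g1m))
    (k1b : g0m2 * f1m1 = f1m2 * g0m1 + d * (f0m2 * g1m1))
    (k3 : f0m2 * g1m = g1m1 * f0m1 - f1m1 * g0m1) :
    g0m * g1m1 / (g0m1 * g1m) + g0m2 * g1m / (g0m1 * g1m1)
      = f1m * g1m1 / (f1m1 * g1m) + f1m2 * g1m / (f1m1 * g1m1) - d := by
  have key : f1m1 * (g0m * g1m1 ^ 2 + g0m2 * g1m ^ 2)
      = g0m1 * (f1m * g1m1 ^ 2 + f1m2 * g1m ^ 2 - d * f1m1 * g1m * g1m1) := by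
    linear_combination g1m ^ 2 * k1b - g1m1 ^ 2 * k1a + d * g1m1 * g1m * k3
  have hB : g0m1 * g1m ≠ 0 := mul_ne_zero h5a h4a
  have hD : g0m1 * g1m1 ≠ 0 := mul_ne_zero h5a h4b
  have hF : f1m1 * g1m ≠ 0 := mul_ne_zero h1a h4a
  have hH : f1m1 * g1m1 ≠ 0 := mul_ne_zero h1a h4b
  have hBD : (g0m1 * g1m) * (g0m1 * g1m1) ≠ 0 := mul_ne_zero hB hD
  have hFH : (f1m1 * g1m) * (f1m1 * g1m1) ≠ 0 := mul_ne_zero hF hH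
  rw [div_add_div _ _ hB hD, div_add_div _ _ hF hH, eq_sub_iff_add_eq,
    div_add' _ _ _ hBD, div_eq_div_iff hBD hFH]
  linear_combination f1m1 * g0m1 * g1m * g1m1 * key

lemma alg2 (g0m g0m1 g1m f0m1 f1m L d : ℝ)
    (h5a : g0m1 ≠ 0) (h4a : g1m ≠ 0) (h2a : f0m1 ≠ 0) (hL : L ≠ 0)
    (k1a : g0m1 * f1m = (L * f0m1) * g0m + d * (f0m1 * g1m)) :
    g0m * (L * g0m1) / (g0m1 * g1m) = f1m * (L * g0m1) / ((L * f0m1) * g1m) - d := by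
  have hB : g0m1 * g1m ≠ 0 := mul_ne_zero h5a h4a
  have hF : (L * f0m1) * g1m ≠ 0 := mul_ne_zero (mul_ne_zero hL h2a) h4a
  rw [eq_sub_iff_add_eq, div_add' _ _ _ hB, div_eq_div_iff hB hF]
  linear_combination (-(L * g1m * g0m1)) * k1a

lemma alg3 (g0m1 g0m2 g1m g1m1 g1m2 f1m1 f1m2 : ℝ)
    (h5a : g0m1 ≠ 0) (h5b : g0m2 ≠ 0) (h4b : g1m1 ≠ 0) (h1a : f1m1 ≠ 0) (h1b : f1m2 ≠ 0) :
    (g0m1 * g1m2 / (g0m2 * g1m1)) * (g0m2 * g1m / (g0m1 * g1m1))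
      = (f1m1 * g1m2 / (f1m2 * g1m1)) * (f1m2 * g1m / (f1m1 * g1m1)) := by
  field_simp

end Alg

end Stmt8Aux

open Stmt8Aux

theorem stmt8 (N : ℕ) (hN : 1 ≤ N) (lam c : Fin N → ℝ) (δ : ℕ → ℝ)
    (hlam : ∀ j, lam j ≠ 0) (s : ℤ) (n : ℕ)
    (h1 : ∀ i, 1 ≤ i → i ≤ N → tauH lam c δ i s n ≠ 0)
    (h2 : ∀ i, 1 ≤ i → i ≤ N → tauH lam c δ i (s - 1) n ≠ 0)
    (h3 : ∀ i, 1 ≤ i → i ≤ N → tauH lam c δ i (s + 1) n ≠ 0)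
    (h4 : ∀ i, 1 ≤ i → i ≤ N → tauH lam c δ i s (n + 1) ≠ 0)
    (h5 : ∀ i, 1 ≤ i → i ≤ N → tauH lam c δ i (s - 1) (n + 1) ≠ 0) :
    (∀ i, 1 ≤ i → i ≤ N →
      Qsn lam c δ i (s - 1) (n + 1) + Esn lam c δ i (s - 1) (n + 1)
        = Qbsn lam c δ i s n + Ebsn lam c δ i s n - δ n) ∧
    (∀ i, 1 ≤ i → i ≤ N - 1 →
      Qsn lam c δ (i + 1) (s - 1) (n + 1) * Esn lam c δ i (s - 1) (n + 1)
        = Qbsn lam c δ (i + 1) s n * Ebsn lam c δ i s n) := by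
  classical
  set b : ℕ → ℝ := fun m => mom lam c δ m (s - 1) n with hb
  set c' : ℕ → ℝ := fun m => mom lam c δ m (s - 1) (n + 1) with hc'
  have hbc : ∀ m, c' m = b (m + 1) + δ n * b m := by
    intro m
    exact mom_rec lam c δ hlam m s n
  have TB0 : ∀ i, tauH lam c δ i (s - 1) n = Hm b i := fun i => rfl
  have TB1 : ∀ i, tauH lam c δ i s n = Hm (fun m => b (m + 1)) i := by
    intro i
    unfold tauH Hm
    congr 1
    ext j k
    simp only [Matrix.of_apply]
    exact (mom_shift lam c δ (j.1 + k.1) s n).symm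
  have TC0 : ∀ i, tauH lam c δ i (s - 1) (n + 1) = Hm c' i := fun i => rfl
  have TC1 : ∀ i, tauH lam c δ i s (n + 1) = Hm (fun m => c' (m + 1)) i := by
    intro i
    unfold tauH Hm
    congr 1
    ext j k
    simp only [Matrix.of_apply]
    exact (mom_shift lam c δ (j.1 + k.1) s (n + 1)).symm
  have Hm0 : ∀ u : ℕ → ℝ, Hm u 0 = 1 := fun u => Matrix.det_fin_zero
  have hgc0 : ∀ i, i ≤ N → Hm c' i ≠ 0 := by
    intro i hi
    cases i with
    | zero => rw [Hm0]; exact one_ne_zero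
    | succ m => rw [← TC0]; exact h5 (m + 1) (by omega) hi
  have hgc1 : ∀ i, i ≤ N → Hm (fun m => c' (m + 1)) i ≠ 0 := by
    intro i hi
    cases i with
    | zero => rw [Hm0]; exact one_ne_zero
    | succ m => rw [← TC1]; exact h4 (m + 1) (by omega) hi
  have hfb1 : ∀ i, i ≤ N → Hm (fun m => b (m + 1)) i ≠ 0 := by
    intro i hi
    cases i with
    | zero => rw [Hm0]; exact one_ne_zero
    | succ m => rw [← TB1]; exact h1 (m + 1) (by omega) hi
  have hfb0 : ∀ i, i ≤ N → Hm b i ≠ 0 := by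
    intro i hi
    cases i with
    | zero => rw [Hm0]; exact one_ne_zero
    | succ m => rw [← TB0]; exact h2 (m + 1) (by omega) hi
  have K1 : ∀ p, p + 1 ≤ N → Hm c' (p + 1) * Hm (fun m => b (m + 1)) p
      = Hm (fun m => b (m + 1)) (p + 1) * Hm c' p
        + δ n * (Hm b (p + 1) * Hm (fun m => c' (m + 1)) p) :=
    fun p hp => K1seq b c' (δ n) hbc p (hgc0 (p + 1) hp)
  have K3 : ∀ q, q + 2 ≤ N → Hm b (q + 2) * Hm (fun m => c' (m + 1)) q
      = Hm (fun m => c' (m + 1)) (q + 1) * Hm b (q + 1)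
        - Hm (fun m => b (m + 1)) (q + 1) * Hm c' (q + 1) :=
    fun q hq => K3seq b c' (δ n) hbc q (hfb0 (q + 2) hq)
  have hscaleF : Hm (fun m => b (m + 1)) N = (∏ j, lam j) * Hm b N := by
    rw [← TB1, ← TB0]
    have h := tau_scale lam c δ hlam (s - 1) n
    rw [sub_add_cancel] at h
    exact h
  have hscaleG : Hm (fun m => c' (m + 1)) N = (∏ j, lam j) * Hm c' N := by
    rw [← TC1, ← TC0]
    have h := tau_scale lam c δ hlam (s - 1) (n + 1)
    rw [sub_add_cancel] at h
    exact h
  have hLne : (∏ j, lam j) ≠ 0 := Finset.prod_ne_zero_iff.mpr fun j _ => hlam j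
  constructor
  · intro i hi1 hiN
    obtain ⟨m, rfl⟩ : ∃ m, i = m + 1 := ⟨i - 1, by omega⟩
    have eQ : Qsn lam c δ (m + 1) (s - 1) (n + 1)
        = Hm c' m * Hm (fun m => c' (m + 1)) (m + 1)
          / (Hm c' (m + 1) * Hm (fun m => c' (m + 1)) m) := by
      unfold Qsn
      rw [Nat.add_sub_cancel, sub_add_cancel, TC0, TC0, TC1, TC1]
    have eQb : Qbsn lam c δ (m + 1) s n
        = Hm (fun m => b (m + 1)) m * Hm (fun m => c' (m + 1)) (m + 1)
          / (Hm (fun m => b (m + 1)) (m + 1) * Hm (fun m => c' (m + 1)) m) := by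
      unfold Qbsn
      rw [Nat.add_sub_cancel, TB1, TB1, TC1, TC1]
    rcases Nat.lt_or_ge (m + 1) N with hlt | hge
    · have hne : ¬(m + 1 = 0 ∨ m + 1 = N) := by omega
      have eE : Esn lam c δ (m + 1) (s - 1) (n + 1)
          = Hm c' (m + 2) * Hm (fun m => c' (m + 1)) m
            / (Hm c' (m + 1) * Hm (fun m => c' (m + 1)) (m + 1)) := by
        unfold Esn
        rw [if_neg hne, Nat.add_sub_cancel, sub_add_cancel, TC0, TC0, TC1, TC1]
      have eEb : Ebsn lam c δ (m + 1) s n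
          = Hm (fun m => b (m + 1)) (m + 2) * Hm (fun m => c' (m + 1)) m
            / (Hm (fun m => b (m + 1)) (m + 1) * Hm (fun m => c' (m + 1)) (m + 1)) := by
        unfold Ebsn
        rw [if_neg hne, Nat.add_sub_cancel, TB1, TB1, TC1, TC1]
      rw [eQ, eE, eQb, eEb]
      exact alg1 (Hm c' m) (Hm c' (m + 1)) (Hm c' (m + 2))
        (Hm (fun m => c' (m + 1)) m) (Hm (fun m => c' (m + 1)) (m + 1))
        (Hm b (m + 1)) (Hm b (m + 2))
        (Hm (fun m => b (m + 1)) m) (Hm (fun m => b (m + 1)) (m + 1))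
        (Hm (fun m => b (m + 1)) (m + 2)) (δ n)
        (hgc0 (m + 1) hiN) (hgc1 m (by omega)) (hgc1 (m + 1) hiN) (hfb1 (m + 1) hiN)
        (K1 m hiN) (K1 (m + 1) (by omega)) (K3 m (by omega))
    · have hNe : m + 1 = N := le_antisymm hiN hge
      subst hNe
      have hcond : (m + 1 = 0 ∨ m + 1 = m + 1) := Or.inr rfl
      have eE : Esn lam c δ (m + 1) (s - 1) (n + 1) = 0 := by
        unfold Esn; rw [if_pos hcond]
      have eEb : Ebsn lam c δ (m + 1) s n = 0 := by
        unfold Ebsn; rw [if_pos hcond]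
      rw [eQ, eQb, eE, eEb, add_zero, add_zero, hscaleG, hscaleF]
      have k1a := K1 m (le_refl (m + 1))
      rw [hscaleF] at k1a
      exact alg2 (Hm c' m) (Hm c' (m + 1)) (Hm (fun m => c' (m + 1)) m)
        (Hm b (m + 1)) (Hm (fun m => b (m + 1)) m) (∏ j, lam j) (δ n)
        (hgc0 (m + 1) (le_refl _)) (hgc1 m (by omega)) (hfb0 (m + 1) (le_refl _)) hLne k1a
  · intro i hi1 hiN1
    have hiN : i + 1 ≤ N := by omega
    obtain ⟨m, rfl⟩ : ∃ m, i = m + 1 := ⟨i - 1, by omega⟩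
    have hne : ¬(m + 1 = 0 ∨ m + 1 = N) := by omega
    have eQ : Qsn lam c δ (m + 2) (s - 1) (n + 1)
        = Hm c' (m + 1) * Hm (fun m => c' (m + 1)) (m + 2)
          / (Hm c' (m + 2) * Hm (fun m => c' (m + 1)) (m + 1)) := by
      unfold Qsn
      rw [show m + 2 - 1 = m + 1 from rfl, sub_add_cancel, TC0, TC0, TC1, TC1]
    have eE : Esn lam c δ (m + 1) (s - 1) (n + 1)
        = Hm c' (m + 2) * Hm (fun m => c' (m + 1)) m
          / (Hm c' (m + 1) * Hm (fun m => c' (m + 1)) (m + 1)) := by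
      unfold Esn
      rw [if_neg hne, Nat.add_sub_cancel, sub_add_cancel, TC0, TC0, TC1, TC1]
    have eQb : Qbsn lam c δ (m + 2) s n
        = Hm (fun m => b (m + 1)) (m + 1) * Hm (fun m => c' (m + 1)) (m + 2)
          / (Hm (fun m => b (m + 1)) (m + 2) * Hm (fun m => c' (m + 1)) (m + 1)) := by
      unfold Qbsn
      rw [show m + 2 - 1 = m + 1 from rfl, TB1, TB1, TC1, TC1]
    have eEb : Ebsn lam c δ (m + 1) s n
        = Hm (fun m => b (m + 1)) (m + 2) * Hm (fun m => c' (m + 1)) m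
          / (Hm (fun m => b (m + 1)) (m + 1) * Hm (fun m => c' (m + 1)) (m + 1)) := by
      unfold Ebsn
      rw [if_neg hne, Nat.add_sub_cancel, TB1, TB1, TC1, TC1]
    rw [eQ, eE, eQb, eEb]
    exact alg3 (Hm c' (m + 1)) (Hm c' (m + 2)) (Hm (fun m => c' (m + 1)) m)
      (Hm (fun m => c' (m + 1)) (m + 1)) (Hm (fun m => c' (m + 1)) (m + 2))
      (Hm (fun m => b (m + 1)) (m + 1)) (Hm (fun m => b (m + 1)) (m + 2))
      (hgc0 (m + 1) (by omega)) (hgc0 (m + 2) (by omega)) (hgc1 (m + 1) (by omega))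
      (hfb1 (m + 1) (by omega)) (hfb1 (m + 2) (by omega))
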